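/- arXiv:math/0510472 — 2 statements merged into one kernel-verified Lean document; each statement's English description precedes it below -/
import Mathlib

section
/- Let 1 < q < 2, a ≥ 2 and b ≥ 1/2 + 1/a be real numbers, and let z ∈ ℂ with z ≠ 0. Let D₁ := {ξ ∈ ℂ : |ξ − z| < |z|/a}, D₂ := {ξ ∈ ℂ : |ξ| < |z|/a}, and D₃ := ℂ \ (D₁ ∪ D₂). Then ∫_{D₃} ( |z| / (|ξ − z|·|ξ|) )^q dA(ξ) ≤ [ a^{2q}·π·(b² − 2/a²) + π·(b² − 1/4)^{1−q}/(q−1) ] · |z|^{2−q}. -/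
open MeasureTheory Real Set Metric Filter

lemma aux_int {q c₀ R : ℝ} (hq1 : 1 < q) (hc₀ : 0 ≤ c₀) (hRc : c₀ < R^2) (hR : 0 < R) :
    ∫ y in Ioi R, y * (y^2 - c₀) ^ (-q) = (R^2 - c₀) ^ (1-q) / (2*(q-1)) := by
  have hq1' : (1:ℝ) - q ≠ 0 := by linarith
  have hderiv : ∀ y ∈ Ici R, HasDerivAt (fun y : ℝ => (y^2 - c₀) ^ (1-q) / (2*(1-q)))
      (y * (y^2 - c₀) ^ (-q)) y := by
    intro y hy
    have hy0 : 0 < y := lt_of_lt_of_le hR hy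
    have hpos : 0 < y^2 - c₀ := by
      have : R^2 ≤ y^2 := by nlinarith [hy.out]
      linarith
    have h1 : HasDerivAt (fun y : ℝ => y^2 - c₀) (2*y) y := by
      simpa using (hasDerivAt_pow 2 y).sub_const c₀
    have h2 : HasDerivAt (fun t : ℝ => t ^ (1-q)) ((1-q) * (y^2-c₀) ^ (1-q-1)) (y^2-c₀) :=
      Real.hasDerivAt_rpow_const (Or.inl hpos.ne')
    have h3 := (h2.comp y h1).div_const (2*(1-q))
    refine h3.congr_deriv ?_
    have : (1:ℝ) - q - 1 = -q := by ring
    rw [this]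
    field_simp
  have hpos : ∀ y ∈ Ioi R, 0 ≤ y * (y^2 - c₀) ^ (-q) := by
    intro y hy
    have hy0 : 0 < y := lt_trans hR hy
    have : (0:ℝ) ≤ y^2 - c₀ := by nlinarith [hy.out]
    positivity
  have htend : Tendsto (fun y : ℝ => (y^2 - c₀) ^ (1-q) / (2*(1-q))) atTop (nhds 0) := by
    have h1 : Tendsto (fun y : ℝ => y^2 - c₀) atTop atTop := by
      apply tendsto_atTop_add_const_right
      exact tendsto_pow_atTop (by norm_num)
    have h2 : Tendsto (fun t : ℝ => t ^ (-(q-1))) atTop (nhds 0) :=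
      tendsto_rpow_neg_atTop (by linarith)
    have h3 : Tendsto (fun y : ℝ => (y^2 - c₀) ^ (1-q)) atTop (nhds 0) := by
      have := h2.comp h1
      simpa [Function.comp_def, neg_sub] using this
    simpa using h3.div_const (2*(1-q))
  rw [integral_Ioi_of_hasDerivAt_of_nonneg' hderiv hpos htend]
  have e1 : (2:ℝ)*(1-q) ≠ 0 := by intro h; apply hq1'; rcases mul_eq_zero.mp h with h|h <;> linarith
  have e2 : (2:ℝ)*(q-1) ≠ 0 := ne_of_gt (by linarith)
  rw [zero_sub, ← neg_div, div_eq_div_iff e1 e2]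
  ring

lemma aux2 {q c₀ R rr : ℝ} (hq1 : 1 < q) (hc₀ : 0 < c₀) (hRc : c₀ < R^2) (hR : 0 < R)
    (hrr : 0 < rr) :
    ∫⁻ u : ℂ, ENNReal.ofReal (Set.indicator (Ici R) (fun s => (rr/(s^2 - c₀))^q) ‖u‖)
      = ENNReal.ofReal (π * rr^q * ((R^2-c₀)^(1-q)/(q-1))) := by
  set f : ℝ → ℝ := Set.indicator (Ici R) (fun s => (rr/(s^2 - c₀))^q) with hf
  have hq0 : 0 < q := by linarith
  have hposR : 0 < R^2 - c₀ := by linarith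
  have hsub : ∀ s : ℝ, R ≤ s → 0 < s^2 - c₀ := by
    intro s hs; nlinarith
  have hfnn : ∀ s, 0 ≤ f s := by
    intro s
    apply Set.indicator_nonneg
    intro s hs
    have h := hsub s hs
    positivity
  have hmeas : Measurable f := by
    apply Measurable.indicator _ measurableSet_Ici
    fun_prop
  -- integrability
  set K : ℝ := rr * (1+R)^2 / (R^2 - c₀) with hK
  have hK0 : 0 ≤ K := by positivity
  have hbound : ∀ s : ℝ, 0 ≤ s → f s ≤ K^q * (1+s) ^ (-(2*q)) := by
    intro s hs
    have h1s : (0:ℝ) < 1 + s := by linarith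
    by_cases hmem : s ∈ Ici R
    · have hs2 : 0 < s^2 - c₀ := hsub s hmem
      have hsR : R ≤ s := hmem
      have key : rr/(s^2 - c₀) ≤ K / (1+s)^2 := by
        rw [div_le_div_iff₀ hs2 (by positivity), hK, div_mul_eq_mul_div, le_div_iff₀ hposR]
        have hA : R*(1+s) ≤ (1+R)*s := by nlinarith
        have hA2 : R^2*(1+s)^2 ≤ (1+R)^2*s^2 := by
          have := pow_le_pow_left₀ (by positivity : (0:ℝ) ≤ R*(1+s)) hA 2
          nlinarith [this]
        have hR2s2 : R^2 ≤ s^2 := by nlinarith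
        have hB : (R^2 - c₀) * s^2 ≤ R^2 * (s^2 - c₀) := by nlinarith [mul_le_mul_of_nonneg_right hR2s2 hc₀.le]
        have hC : R^2 * ((1+s)^2*(R^2-c₀)) ≤ R^2*((1+R)^2*(s^2-c₀)) := by
          calc R^2*((1+s)^2*(R^2-c₀)) = (R^2*(1+s)^2)*(R^2-c₀) := by ring
            _ ≤ ((1+R)^2*s^2)*(R^2-c₀) := mul_le_mul_of_nonneg_right hA2 hposR.le
            _ = (1+R)^2*((R^2-c₀)*s^2) := by ring
            _ ≤ (1+R)^2*(R^2*(s^2-c₀)) := mul_le_mul_of_nonneg_left hB (by positivity)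
            _ = R^2*((1+R)^2*(s^2-c₀)) := by ring
        have hD : (1+s)^2*(R^2-c₀) ≤ (1+R)^2*(s^2-c₀) :=
          le_of_mul_le_mul_left hC (by positivity)
        nlinarith [mul_le_mul_of_nonneg_left hD hrr.le]
      have : f s = (rr/(s^2-c₀))^q := Set.indicator_of_mem hmem _
      rw [this]
      calc (rr/(s^2-c₀))^q ≤ (K/(1+s)^2)^q :=
            Real.rpow_le_rpow (by positivity) key hq0.le
        _ = K^q / ((1+s)^2)^q := Real.div_rpow hK0 (by positivity) q
        _ = K^q * (1+s) ^ (-(2*q)) := by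
            rw [← Real.rpow_natCast (1+s) 2, ← Real.rpow_mul h1s.le, Real.rpow_neg h1s.le,
              div_eq_mul_inv]
            norm_num
    · rw [hf, Set.indicator_of_notMem hmem]
      positivity
  have hint : Integrable (fun u : ℂ => f ‖u‖) (volume : Measure ℂ) := by
    have hi : Integrable (fun x : ℂ => K^q * (1 + ‖x‖) ^ (-(2*q))) (volume : Measure ℂ) := by
      apply Integrable.const_mul
      exact integrable_one_add_norm (E := ℂ) (μ := (volume : Measure ℂ)) (r := 2*q)
        (by simpa [Complex.finrank_real_complex] using (by linarith : (2:ℝ) < 2*q))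
    apply hi.mono' ((hmeas.comp measurable_norm).aestronglyMeasurable)
    filter_upwards with u
    simp only [Function.comp_apply]
    rw [Real.norm_of_nonneg (hfnn _)]
    exact hbound _ (norm_nonneg u)
  rw [← MeasureTheory.ofReal_integral_eq_lintegral_ofReal hint
    (Filter.Eventually.of_forall fun u => hfnn _)]
  congr 1
  have h2d := MeasureTheory.integral_fun_norm_addHaar (volume : Measure ℂ) f
  rw [h2d]
  simp only [Complex.finrank_real_complex, Complex.volume_ball, smul_eq_mul, nsmul_eq_mul]
  have hvol : volume.real (ball (0:ℂ) 1) = π := by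
    simp [Measure.real, NNReal.coe_real_pi]
  rw [hvol]
  have hind : ∀ y : ℝ, y ^ (2-1) * f y
      = Set.indicator (Ici R) (fun y => y * (rr/(y^2-c₀))^q) y := by
    intro y
    by_cases h : y ∈ Ici R <;> simp [hf, h, pow_one]
  rw [MeasureTheory.setIntegral_congr_fun measurableSet_Ioi (fun y _ => hind y),
    MeasureTheory.setIntegral_indicator measurableSet_Ici,
    Set.inter_eq_self_of_subset_right (Set.Ici_subset_Ioi.mpr hR),
    MeasureTheory.integral_Ici_eq_integral_Ioi]
  have hcong : ∀ y ∈ Ioi R, y * (rr/(y^2-c₀))^q = rr^q * (y * (y^2-c₀) ^ (-q)) := by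
    intro y hy
    have h2 : 0 < y^2 - c₀ := hsub y (le_of_lt hy)
    rw [Real.div_rpow hrr.le h2.le q, Real.rpow_neg h2.le, div_eq_mul_inv]
    ring
  rw [MeasureTheory.setIntegral_congr_fun measurableSet_Ioi hcong,
    MeasureTheory.integral_const_mul, aux_int hq1 hc₀.le hRc hR]
  have hq1'' : q - 1 ≠ 0 := by intro h; exact absurd (by linarith : q = 1) (by linarith)
  push_cast
  field_simp

lemma volume_ball_complex (w : ℂ) {s : ℝ} (hs : 0 ≤ s) :
    volume (Metric.ball w s) = ENNReal.ofReal (π * s^2) := by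
  rw [Complex.volume_ball, ← ENNReal.ofReal_pow hs, mul_comm,
    ← ENNReal.ofReal_coe_nnreal, NNReal.coe_real_pi, ← ENNReal.ofReal_mul Real.pi_nonneg]

set_option maxHeartbeats 1000000 in
/-- bound on the `L_q` integral of the Cauchy kernel `z/((ξ-z)ξ)` over
`D₃ = ℂ \ (D₁ ∪ D₂)`, where `D₁ = {|ξ-z| < |z|/a}` and `D₂ = {|ξ| < |z|/a}`. -/
theorem stmt5 (q a b : ℝ) (hq1 : 1 < q) (hq2 : q < 2) (ha : 2 ≤ a)
    (hb : 1 / 2 + 1 / a ≤ b) (z : ℂ) (hz : z ≠ 0) :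
    ∫⁻ ξ in (Set.univ : Set ℂ) \
        ({ξ : ℂ | ‖ξ - z‖ < ‖z‖ / a} ∪
          {ξ : ℂ | ‖ξ‖ < ‖z‖ / a}),
        ENNReal.ofReal ((‖z‖ / (‖ξ - z‖ * ‖ξ‖)) ^ q) ≤
      ENNReal.ofReal
        ((a ^ (2 * q) * π * (b ^ 2 - 2 / a ^ 2) +
            π * (b ^ 2 - 1 / 4) ^ (1 - q) / (q - 1)) * ‖z‖ ^ (2 - q)) := by
  set r := ‖z‖ with hrdef
  have hr : 0 < r := by
    rw [hrdef]
    exact norm_pos_iff.mpr hz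
  have ha0 : (0:ℝ) < a := by linarith
  have h1a : (0:ℝ) < 1/a := by positivity
  have h1a2 : (1:ℝ)/a ≤ 1/2 := by
    rw [div_le_div_iff₀ ha0 (by norm_num)]; linarith
  have hb0 : (1:ℝ)/2 < b := by linarith
  have hq0 : 0 < q := by linarith
  set c : ℂ := z/2 with hc
  have habsc : ‖c‖ = r/2 := by
    rw [hc, norm_div, hrdef]
    norm_num
  set R : ℝ := b * r with hRdef
  have hRpos : 0 < R := by positivity
  set c₀ : ℝ := r^2/4 with hc₀def
  have hc₀pos : 0 < c₀ := by positivity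
  have hc₀R : c₀ < R^2 := by
    rw [hRdef, hc₀def]
    nlinarith [mul_pos (mul_pos (by linarith : (0:ℝ) < b - 1/2) (by linarith : (0:ℝ) < b + 1/2)) (mul_pos hr hr)]
  set B1 : Set ℂ := Metric.ball z (r/a) with hB1
  set B2 : Set ℂ := Metric.ball 0 (r/a) with hB2
  set BB : Set ℂ := Metric.ball c R with hBB
  set T : Set ℂ := {ξ : ℂ | R ≤ ‖ξ - c‖} with hT
  have hTmeas : MeasurableSet T := by
    apply IsClosed.measurableSet
    apply isClosed_le continuous_const
    exact continuous_norm.comp (continuous_id.sub continuous_const)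
  have hdom : (Set.univ : Set ℂ) \
      ({ξ : ℂ | ‖ξ - z‖ < r / a} ∪ {ξ : ℂ | ‖ξ‖ < r / a})
      = (B1 ∪ B2)ᶜ := by
    ext ξ
    simp [hB1, hB2, Metric.mem_ball, Complex.dist_eq]
  have hsubdom : (B1 ∪ B2)ᶜ ⊆ (BB \ (B1 ∪ B2)) ∪ T := by
    intro ξ hξ
    by_cases h : ‖ξ - c‖ < R
    · left
      refine ⟨?_, hξ⟩
      rw [hBB, Metric.mem_ball, Complex.dist_eq]
      exact h
    · right
      exact not_lt.mp h
  -- the near part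
  have hnear : ∫⁻ ξ in BB \ (B1 ∪ B2),
      ENNReal.ofReal ((r / (‖ξ - z‖ * ‖ξ‖)) ^ q)
      ≤ ENNReal.ofReal (a^(2*q) * π * (b^2 - 2/a^2) * r^(2-q)) := by
    have hmeasS : MeasurableSet (BB \ (B1 ∪ B2)) :=
      measurableSet_ball.diff (measurableSet_ball.union measurableSet_ball)
    have hpt : ∀ ξ ∈ BB \ (B1 ∪ B2),
        ENNReal.ofReal ((r / (‖ξ - z‖ * ‖ξ‖)) ^ q)
          ≤ ENNReal.ofReal ((a^2/r) ^ q) := by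
      intro ξ hξ
      have hξ2 := hξ.2
      rw [Set.mem_union, hB1, hB2, Metric.mem_ball, Metric.mem_ball, Complex.dist_eq,
        Complex.dist_eq, sub_zero] at hξ2
      push_neg at hξ2
      obtain ⟨h1, h2⟩ := hξ2
      have hra : 0 < r/a := by positivity
      apply ENNReal.ofReal_le_ofReal
      apply Real.rpow_le_rpow (by positivity) _ hq0.le
      have hx : 0 < ‖ξ - z‖ := lt_of_lt_of_le hra h1
      have hy : 0 < ‖ξ‖ := lt_of_lt_of_le hra h2
      rw [div_le_div_iff₀ (by positivity) hr]
      have hxy : (r/a)*(r/a) ≤ ‖ξ - z‖ * ‖ξ‖ :=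
        mul_le_mul h1 h2 hra.le hx.le
      have : (r/a)*(r/a)*a^2 = r*r := by field_simp
      nlinarith [mul_le_mul_of_nonneg_right hxy (by positivity : (0:ℝ) ≤ a^2)]
    have hvol : volume (BB \ (B1 ∪ B2)) ≤ ENNReal.ofReal (π * (b^2 - 2/a^2) * r^2) := by
      have hd : Disjoint B1 B2 := by
        apply Metric.ball_disjoint_ball
        rw [Complex.dist_eq, sub_zero, ← hrdef]
        rw [← add_div, div_le_iff₀ ha0]
        nlinarith
      have hsub1 : B1 ⊆ BB := by
        have hdzc : ‖z - c‖ = r/2 := by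
          rw [hc]
          have h2 : z - z/2 = z/2 := by ring
          rw [h2, norm_div, hrdef]; norm_num
        apply Metric.ball_subset_ball'
        rw [Complex.dist_eq, hdzc, hRdef]
        have h := mul_le_mul_of_nonneg_right hb hr.le
        have h2 : (1/2 + 1/a) * r = r/2 + r/a := by ring
        linarith
      have hsub2 : B2 ⊆ BB := by
        apply Metric.ball_subset_ball'
        have : dist (0:ℂ) c = r/2 := by
          rw [Complex.dist_eq, zero_sub, norm_neg, habsc]
        rw [this, hRdef]
        have h := mul_le_mul_of_nonneg_right hb hr.le
        have h2 : (1/2 + 1/a) * r = r/2 + r/a := by ring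
        linarith
      have hU : volume (B1 ∪ B2) = ENNReal.ofReal (2 * (π * (r/a)^2)) := by
        rw [measure_union hd measurableSet_ball, hB1, hB2,
          volume_ball_complex z (by positivity : (0:ℝ) ≤ r/a),
          volume_ball_complex 0 (by positivity : (0:ℝ) ≤ r/a),
          ← ENNReal.ofReal_add (by positivity) (by positivity)]
        congr 1; ring
      have hdiff : volume (BB \ (B1 ∪ B2)) = volume BB - volume (B1 ∪ B2) := by
        apply measure_diff (Set.union_subset hsub1 hsub2)
          ((measurableSet_ball.union measurableSet_ball).nullMeasurableSet)
        rw [hU]; exact ENNReal.ofReal_ne_top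
      rw [hdiff, hU, hBB, volume_ball_complex c hRpos.le,
        ← ENNReal.ofReal_sub _ (by positivity)]
      apply ENNReal.ofReal_le_ofReal
      rw [hRdef]
      have : π * (b*r)^2 - 2*(π*(r/a)^2) = π * (b^2 - 2/a^2) * r^2 := by
        field_simp
      rw [this]
    calc ∫⁻ ξ in BB \ (B1 ∪ B2),
        ENNReal.ofReal ((r / (‖ξ - z‖ * ‖ξ‖)) ^ q)
        ≤ ∫⁻ _ in BB \ (B1 ∪ B2), ENNReal.ofReal ((a^2/r) ^ q) :=
          setLIntegral_mono' hmeasS hpt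
      _ = ENNReal.ofReal ((a^2/r) ^ q) * volume (BB \ (B1 ∪ B2)) := setLIntegral_const _ _
      _ ≤ ENNReal.ofReal ((a^2/r) ^ q) * ENNReal.ofReal (π * (b^2 - 2/a^2) * r^2) := by
          exact mul_le_mul_right hvol _
      _ = ENNReal.ofReal ((a^2/r) ^ q * (π * (b^2 - 2/a^2) * r^2)) := by
          rw [← ENNReal.ofReal_mul (by positivity)]
      _ = ENNReal.ofReal (a^(2*q) * π * (b^2 - 2/a^2) * r^(2-q)) := by
          congr 1
          have e1 : (a^2/r)^q = a^(2*q)/r^q := by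
            rw [Real.div_rpow (by positivity) hr.le q, ← Real.rpow_natCast a 2,
              ← Real.rpow_mul ha0.le]
            norm_num
          have e2 : r^((2:ℝ)-q) = r^2/r^q := by
            rw [Real.rpow_sub hr, ← Real.rpow_natCast r 2]
            norm_num
          rw [e1, e2]
          ring
  -- the far part
  have hfar : ∫⁻ ξ in T,
      ENNReal.ofReal ((r / (‖ξ - z‖ * ‖ξ‖)) ^ q)
      ≤ ENNReal.ofReal (π * (b^2 - 1/4)^(1-q)/(q-1) * r^(2-q)) := by
    have hpt : ∀ ξ ∈ T,
        ENNReal.ofReal ((r / (‖ξ - z‖ * ‖ξ‖)) ^ q)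
          ≤ ENNReal.ofReal (Set.indicator (Set.Ici R) (fun s => (r/(s^2 - c₀))^q) ‖ξ - c‖) := by
      intro ξ hξ
      have hξT : R ≤ ‖ξ - c‖ := hξ
      have hnorm : ‖ξ - c‖ = ‖ξ - c‖ := rfl
      have hmem : ‖ξ - c‖ ∈ Set.Ici R := by rw [hnorm]; exact hξT
      rw [Set.indicator_of_mem hmem, hnorm]
      have hden : 0 < ‖ξ - c‖^2 - c₀ := by nlinarith
      have key : ‖ξ - c‖^2 - c₀ ≤ ‖ξ - z‖ * ‖ξ‖ := by
        have hid : (ξ - z) * ξ = (ξ - c)^2 - c^2 := by rw [hc]; ring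
        have htri : ‖(ξ-c)^2‖ - ‖c^2‖
            ≤ ‖(ξ-c)^2 - c^2‖ := by
          have := norm_add_le ((ξ-c)^2 - c^2) (c^2)
          simp only [sub_add_cancel] at this
          linarith
        calc ‖ξ - c‖^2 - c₀
            = ‖(ξ-c)^2‖ - ‖c^2‖ := by
              rw [norm_pow, norm_pow, habsc, hc₀def]; ring
          _ ≤ ‖(ξ-c)^2 - c^2‖ := htri
          _ = ‖ξ - z‖ * ‖ξ‖ := by rw [← hid, norm_mul]
      apply ENNReal.ofReal_le_ofReal
      apply Real.rpow_le_rpow (by positivity) _ hq0.le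
      exact div_le_div_of_nonneg_left hr.le hden key
    calc ∫⁻ ξ in T, ENNReal.ofReal ((r / (‖ξ - z‖ * ‖ξ‖)) ^ q)
        ≤ ∫⁻ ξ in T, ENNReal.ofReal
            (Set.indicator (Set.Ici R) (fun s => (r/(s^2 - c₀))^q) ‖ξ - c‖) :=
          setLIntegral_mono' hTmeas hpt
      _ ≤ ∫⁻ ξ : ℂ, ENNReal.ofReal
            (Set.indicator (Set.Ici R) (fun s => (r/(s^2 - c₀))^q) ‖ξ - c‖) :=
          setLIntegral_le_lintegral _ _
      _ = ∫⁻ ξ : ℂ, ENNReal.ofReal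
            (Set.indicator (Set.Ici R) (fun s => (r/(s^2 - c₀))^q) ‖ξ‖) := by
          have heq : ∀ ξ : ℂ, ξ - c = ξ + -c := fun ξ => sub_eq_add_neg ξ c
          simp_rw [heq]
          exact lintegral_add_right_eq_self
            (fun ξ : ℂ => ENNReal.ofReal
              (Set.indicator (Set.Ici R) (fun s => (r/(s^2 - c₀))^q) ‖ξ‖)) (-c)
      _ = ENNReal.ofReal (π * r^q * ((R^2 - c₀)^(1-q)/(q-1))) :=
          aux2 hq1 hc₀pos hc₀R hRpos hr
      _ ≤ ENNReal.ofReal (π * (b^2 - 1/4)^(1-q)/(q-1) * r^(2-q)) := by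
          apply ENNReal.ofReal_le_ofReal
          apply le_of_eq
          have hb14 : (0:ℝ) ≤ b^2 - 1/4 := by nlinarith
          have hRc : R^2 - c₀ = (b^2 - 1/4) * r^2 := by
            rw [hRdef, hc₀def]; ring
          rw [hRc, Real.mul_rpow hb14 (by positivity), ← Real.rpow_natCast r 2,
            ← Real.rpow_mul hr.le]
          have hexp : r^q * r^((2:ℝ)*(1-q)) = r^(2-q) := by
            rw [← Real.rpow_add hr]
            congr 1
            ring
          push_cast
          calc π * r ^ q * ((b^2-1/4)^(1-q) * r^(2*(1-q)) / (q-1))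
              = π * (b^2-1/4)^(1-q)/(q-1) * (r^q * r^(2*(1-q))) := by ring
            _ = π * (b^2-1/4)^(1-q)/(q-1) * r^(2-q) := by rw [hexp]
  -- combine
  rw [hdom]
  calc ∫⁻ ξ in (B1 ∪ B2)ᶜ,
      ENNReal.ofReal ((r / (‖ξ - z‖ * ‖ξ‖)) ^ q)
      ≤ ∫⁻ ξ in (BB \ (B1 ∪ B2)) ∪ T,
          ENNReal.ofReal ((r / (‖ξ - z‖ * ‖ξ‖)) ^ q) :=
        lintegral_mono_set hsubdom
    _ ≤ (∫⁻ ξ in BB \ (B1 ∪ B2),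
          ENNReal.ofReal ((r / (‖ξ - z‖ * ‖ξ‖)) ^ q))
        + ∫⁻ ξ in T, ENNReal.ofReal ((r / (‖ξ - z‖ * ‖ξ‖)) ^ q) :=
        lintegral_union_le _ _ _
    _ ≤ ENNReal.ofReal (a^(2*q) * π * (b^2 - 2/a^2) * r^(2-q))
        + ENNReal.ofReal (π * (b^2 - 1/4)^(1-q)/(q-1) * r^(2-q)) := add_le_add hnear hfar
    _ = ENNReal.ofReal ((a ^ (2 * q) * π * (b ^ 2 - 2 / a ^ 2) +
            π * (b ^ 2 - 1 / 4) ^ (1 - q) / (q - 1)) * r ^ (2 - q)) := by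
        have hN : (0:ℝ) ≤ a^(2*q) * π * (b^2 - 2/a^2) * r^(2-q) := by
          have hb2 : (0:ℝ) ≤ b^2 - 2/a^2 := by
            have e : 2/a^2 = 2*(1/a)^2 := by field_simp
            rw [e]
            have hsq := pow_le_pow_left₀ (by positivity : (0:ℝ) ≤ 1/2 + 1/a) hb 2
            have hiq := mul_le_mul_of_nonneg_right h1a2 h1a.le
            nlinarith [hsq, hiq]
          have := Real.rpow_nonneg hr.le (2-q)
          have := Real.rpow_nonneg ha0.le (2*q)
          positivity
        have hF : (0:ℝ) ≤ π * (b^2 - 1/4)^(1-q)/(q-1) * r^(2-q) := by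
          have hb14 : (0:ℝ) ≤ b^2 - 1/4 := by nlinarith
          have h1 := Real.rpow_nonneg hb14 (1-q)
          have h2 := Real.rpow_nonneg hr.le (2-q)
          have hq1' : (0:ℝ) < q - 1 := by linarith
          positivity
        rw [← ENNReal.ofReal_add hN hF]
        congr 1
        ring
end

section
/- Let κ, ξ, ζ₊, ζ₋ ∈ ℂ with κ ≠ 0, and set α₊ := (ζ₊ − ξ)/κ and α₋ := (ζ₋ − ξ)/κ. Assume Im(α₊) ≠ 0 and Im(α₋) ≠ 0. Then (1/(2π))·[ ∫₀^π (κα + ζ₊ + ξ)/(κα + ζ₊ − ξ) dα + ∫_{−π}^0 (κα + ζ₋ + ξ)/(κα + ζ₋ − ξ) dα ] = 1 + (ξ/(π κ))·[ Log(1 + π/α₊) − Log(1 − π/α₋) ], where Log denotes the principal branch of the complex logarithm. -/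
open Real intervalIntegral

private lemma arg_mem_of_im_ne {z : ℂ} (hz : z.im ≠ 0) :
    z.arg ∈ Set.Ioo (-π) π ∧ z.arg ≠ 0 := by
  refine ⟨⟨Complex.neg_pi_lt_arg z, lt_of_le_of_ne (Complex.arg_le_pi z) ?_⟩, ?_⟩
  · intro h; exact hz (Complex.arg_eq_pi_iff.mp h).2
  · intro h; exact hz (Complex.arg_eq_zero_iff.mp h).2

private lemma log_div_im {a b : ℂ} (ha : a.im ≠ 0) (hb : b.im ≠ 0)
    (hs : 0 < a.im ↔ 0 < b.im) :
    Complex.log (a / b) = Complex.log a - Complex.log b := by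
  have ha0 : a ≠ 0 := fun h => ha (by simp [h])
  have hb0 : b ≠ 0 := fun h => hb (by simp [h])
  have hbπ : b.arg ≠ π := fun h => hb (Complex.arg_eq_pi_iff.mp h).2
  have hinv : (b⁻¹).arg = -b.arg := by rw [Complex.arg_inv, if_neg hbπ]
  have harg : a.arg + (b⁻¹).arg ∈ Set.Ioc (-π) π := by
    rw [hinv]
    obtain ⟨⟨hal, har⟩, ha0'⟩ := arg_mem_of_im_ne ha
    obtain ⟨⟨hbl, hbr⟩, hb0'⟩ := arg_mem_of_im_ne hb
    rcases lt_or_gt_of_ne ha with hneg | hpos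
    · -- a.im < 0, so b.im < 0; args in (-π, 0)
      have hb' : b.im < 0 := by
        by_contra h
        exact absurd (hs.mpr (lt_of_le_of_ne (not_lt.mp h) (Ne.symm hb))) (not_lt.mpr hneg.le)
      have h1 : a.arg < 0 := Complex.arg_neg_iff.mpr hneg
      have h2 : b.arg < 0 := Complex.arg_neg_iff.mpr hb'
      constructor <;> [linarith; linarith]
    · have hb' : 0 < b.im := hs.mp hpos
      have h1 : 0 < a.arg := lt_of_le_of_ne (Complex.arg_nonneg_iff.mpr hpos.le) (Ne.symm ha0')
      have h2 : 0 < b.arg := lt_of_le_of_ne (Complex.arg_nonneg_iff.mpr hb'.le) (Ne.symm hb0')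
      constructor <;> [linarith; linarith]
  rw [div_eq_mul_inv, Complex.log_mul ha0 (inv_ne_zero hb0) harg, Complex.log_inv b hbπ,
    sub_eq_add_neg]

private lemma integral_inv_add (c : ℂ) (hc : c.im ≠ 0) (a b : ℝ) :
    ∫ x in a..b, ((x : ℂ) + c)⁻¹ = Complex.log (b + c) - Complex.log (a + c) := by
  have hne : ∀ x : ℝ, (x : ℂ) + c ≠ 0 := fun x h => hc (by simpa using congrArg Complex.im h)
  have hslit : ∀ x : ℝ, (x : ℂ) + c ∈ Complex.slitPlane := fun x =>
    Complex.mem_slitPlane_iff.mpr (Or.inr (by simpa using hc))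
  have hderiv : ∀ x ∈ Set.uIcc a b,
      HasDerivAt (fun y : ℝ => Complex.log ((y : ℂ) + c)) (((x : ℂ) + c)⁻¹) x := by
    intro x _
    have h1 : HasDerivAt (fun z : ℂ => Complex.log (z + c)) (((x : ℂ) + c)⁻¹) (x : ℂ) := by
      have h := (Complex.hasDerivAt_log (hslit x)).comp (x : ℂ)
        ((hasDerivAt_id (x : ℂ)).add_const c)
      simp only [Function.comp_def, mul_one] at h
      exact h
    exact h1.comp_ofReal
  have hcont : Continuous fun x : ℝ => ((x : ℂ) + c)⁻¹ :=
    ((Complex.continuous_ofReal.add continuous_const).inv₀ hne)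
  exact integral_eq_sub_of_hasDerivAt hderiv (hcont.intervalIntegrable a b)

private lemma key_integral (κ ξ c : ℂ) (hκ : κ ≠ 0) (hc : c.im ≠ 0) (a b : ℝ) :
    ∫ α in a..b, (κ * α + (κ * c + ξ) + ξ) / (κ * α + (κ * c + ξ) - ξ)
      = ((b : ℂ) - a) + (2 * ξ / κ) * (Complex.log (b + c) - Complex.log (a + c)) := by
  have hne : ∀ x : ℝ, (x : ℂ) + c ≠ 0 := fun x h => hc (by simpa using congrArg Complex.im h)
  have hcont : Continuous fun x : ℝ => ((x : ℂ) + c)⁻¹ :=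
    ((Complex.continuous_ofReal.add continuous_const).inv₀ hne)
  have hcongr : ∀ α : ℝ, (κ * α + (κ * c + ξ) + ξ) / (κ * α + (κ * c + ξ) - ξ)
      = 1 + (2 * ξ / κ) * ((α : ℂ) + c)⁻¹ := by
    intro α
    have hd : κ * α + (κ * c + ξ) - ξ = κ * ((α : ℂ) + c) := by ring
    rw [hd]
    field_simp [hne α]
    ring
  rw [intervalIntegral.integral_congr (fun α _ => hcongr α),
    intervalIntegral.integral_add intervalIntegrable_const
      ((hcont.intervalIntegrable a b).const_mul _),
    intervalIntegral.integral_const_mul, integral_inv_add c hc a b]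
  simp [sub_smul]
  try ring

/-- computation of the Fourier coefficient `μ₂(r)` in Section 9 of the
paper: with `α₊ = (ζ₊-ξ)/κ`, `α₋ = (ζ₋-ξ)/κ` having nonzero imaginary parts,
`(1/2π)[∫₀^π (κα+ζ₊+ξ)/(κα+ζ₊-ξ) dα + ∫_{-π}^0 (κα+ζ₋+ξ)/(κα+ζ₋-ξ) dα]
  = 1 + (ξ/(πκ))[Log(1+π/α₊) - Log(1-π/α₋)]`. -/
theorem stmt15 (κ ξ ζp ζm αp αm : ℂ) (hκ : κ ≠ 0)
    (hαp : αp = (ζp - ξ) / κ) (hαm : αm = (ζm - ξ) / κ)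
    (hip : αp.im ≠ 0) (him : αm.im ≠ 0) :
    (1 / (2 * (π : ℂ))) *
        ((∫ α in (0 : ℝ)..π, (κ * α + ζp + ξ) / (κ * α + ζp - ξ)) +
          ∫ α in (-π : ℝ)..0, (κ * α + ζm + ξ) / (κ * α + ζm - ξ)) =
      1 + (ξ / ((π : ℂ) * κ)) *
        (Complex.log (1 + (π : ℂ) / αp) - Complex.log (1 - (π : ℂ) / αm)) := by
  have hαp0 : αp ≠ 0 := fun h => hip (by simp [h])
  have hαm0 : αm ≠ 0 := fun h => him (by simp [h])
  have hζp : ζp = κ * αp + ξ := by rw [hαp]; field_simp; ring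
  have hζm : ζm = κ * αm + ξ := by rw [hαm]; field_simp; ring
  have h1 : ∫ α in (0 : ℝ)..π, (κ * α + ζp + ξ) / (κ * α + ζp - ξ)
      = ((π : ℂ) - (0:ℝ)) + (2 * ξ / κ) *
        (Complex.log ((π:ℝ) + αp) - Complex.log ((0:ℝ) + αp)) := by
    rw [hζp, show κ * αp + ξ = κ * αp + ξ from rfl]
    exact key_integral κ ξ αp hκ hip 0 π
  have h2 : ∫ α in (-π : ℝ)..0, (κ * α + ζm + ξ) / (κ * α + ζm - ξ)
      = ((0 : ℂ) - ((-π : ℝ) : ℂ)) + (2 * ξ / κ) *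
        (Complex.log ((0:ℝ) + αm) - Complex.log ((-π:ℝ) + αm)) := by
    rw [hζm]
    exact key_integral κ ξ αm hκ him (-π) 0
  -- rewrite the logs on the RHS
  have hpim : ((π : ℂ) + αp).im = αp.im := by simp
  have hmim : (αm - (π : ℂ)).im = αm.im := by simp
  have hlogp : Complex.log (1 + (π : ℂ) / αp)
      = Complex.log ((π : ℂ) + αp) - Complex.log αp := by
    have : 1 + (π : ℂ) / αp = ((π : ℂ) + αp) / αp := by field_simp; ring
    rw [this, log_div_im (by rw [hpim]; exact hip) hip (by rw [hpim])]
  have hlogm : Complex.log (1 - (π : ℂ) / αm)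
      = Complex.log (αm - (π : ℂ)) - Complex.log αm := by
    have : 1 - (π : ℂ) / αm = (αm - (π : ℂ)) / αm := by field_simp; try ring
    rw [this, log_div_im (by rw [hmim]; exact him) him (by rw [hmim])]
  have hπ : (π : ℂ) ≠ 0 := by
    exact_mod_cast Real.pi_ne_zero
  rw [h1, h2, hlogp, hlogm]
  push_cast
  rw [show (0:ℂ) + αp = αp from zero_add _, show (0:ℂ) + αm = αm from zero_add _,
    show -(π:ℂ) + αm = αm - (π:ℂ) by ring]
  field_simp
  ring
end
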